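/- Let σ = (A[a], λ_l, λ_r) with λ_l ≥ k ≥ 1, and let m be the number of tuples of R with value a on A. If a clustering S consists of clusters each of which is a subset of the relevant tuples of σ (all with value a on A) and each of size in [k, 2k−1], and the total number of tuples across clusters is p with λ_l ≤ p ≤ λ_r, then Suppress(S) satisfies σ; such a clustering exists iff there exists p ∈ [λ_l, min(λ_r, m)] that can be written as a sum of integers each in [k, 2k−1]; in particular, a sufficient condition is λ_l ≤ m and the interval [λ_l, min(λ_r, m)] contains a multiple of k. -/

import Mathlib

/-- Suppressed version of tuple `t` belonging to cluster `C`: QI attributes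
(in `Q`) on which the cluster's tuples disagree are replaced by `⋆` (here `none`). -/
def supTup {α V : Type*} [DecidableEq α] [DecidableEq V]
    (Q : Finset α) (C : Finset (α → V)) (t : α → V) : α → Option V :=
  fun A => if A ∈ Q ∧ ∃ s ∈ C, s A ≠ t A then none else some (t A)

/-- The relation obtained by suppressing each cluster of the clustering `S`. -/
def suppress {α V : Type*} [DecidableEq α] [DecidableEq V]
    (Q : Finset α) (S : Finset (Finset (α → V))) : Multiset (α → Option V) :=
  ∑ C ∈ S, C.val.map (supTup Q C)

/-- Count of tuples of a suppressed relation with (ground) value `a` on `A`. -/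
def cntO {α V : Type*} [DecidableEq V]
    (R : Multiset (α → Option V)) (A : α) (a : V) : ℕ :=
  (R.filter fun r => r A = some a).card

/-- Suppressed relation satisfies the diversity constraint `(A[a], lo, hi)`. -/
def satO {α V : Type*} [DecidableEq V]
    (R : Multiset (α → Option V)) (A : α) (a : V) (lo hi : ℕ) : Prop :=
  lo ≤ cntO R A a ∧ cntO R A a ≤ hi

/-- Clustering within the relevant tuples of `σ = (A[a], lo, hi)`:
(a) soundness: clusters inside the relevant set with sizes in `[k, 2k-1]` and
total `p ∈ [lo, hi]` yield a suppressed relation satisfying `σ`;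
(b) existence of such a clustering iff some `p ∈ [lo, min hi m]` is a sum of
integers in `[k, 2k-1]` (with `m` the frequency of `a`);
(c) sufficiency: `lo ≤ m` and a multiple of `k` in `[lo, min hi m]`. -/

private lemma filt_sum {β γ : Type*} [DecidableEq β] (S : Finset β) (f : β → Multiset γ)
    (p : γ → Prop) [DecidablePred p] :
    Multiset.filter p (∑ C ∈ S, f C) = ∑ C ∈ S, Multiset.filter p (f C) := by
  classical
  induction S using Finset.induction with
  | empty => simp
  | insert _ _ h ih => simp [Finset.sum_insert h, Multiset.filter_add, ih]

private lemma card_msum {β γ : Type*} (S : Finset β) (f : β → Multiset γ) :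
    Multiset.card (∑ C ∈ S, f C) = ∑ C ∈ S, Multiset.card (f C) := by
  classical
  induction S using Finset.induction with
  | empty => simp
  | insert _ _ h ih => simp [Finset.sum_insert h, ih]

private lemma build_clusters {α V : Type*} [DecidableEq α] [DecidableEq V]
    (k : ℕ) (hk : 1 ≤ k) :
    ∀ (ns : List ℕ) (T : Finset (α → V)),
      (∀ x ∈ ns, k ≤ x ∧ x ≤ 2 * k - 1) → ns.sum ≤ T.card →
      ∃ S : Finset (Finset (α → V)),
        (∀ C ∈ S, C ⊆ T ∧ k ≤ C.card ∧ C.card ≤ 2 * k - 1) ∧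
        (∀ C ∈ S, ∀ C' ∈ S, C ≠ C' → Disjoint C C') ∧ (∑ C ∈ S, C.card) = ns.sum := by
  classical
  intro ns
  induction ns with
  | nil => intro T _ _; exact ⟨∅, by simp, by simp, by simp⟩
  | cons n ns ih =>
    intro T hb hsum
    simp only [List.sum_cons] at hsum
    obtain ⟨s, hsT, hscard⟩ := Finset.exists_subset_card_eq (le_trans (Nat.le_add_right n _) hsum)
    have hrest : ns.sum ≤ (T \ s).card := by
      rw [Finset.card_sdiff_of_subset hsT, hscard]; omega
    obtain ⟨S', hS'1, hS'2, hS'3⟩ := ih (T \ s) (fun x hx => hb x (List.mem_cons_of_mem _ hx)) hrest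
    have hsne : s.Nonempty := Finset.card_pos.mp (by
      have := (hb n (List.mem_cons_self)).1; omega)
    have hsnot : s ∉ S' := by
      intro h
      obtain ⟨x, hx⟩ := hsne
      exact (Finset.mem_sdiff.mp ((hS'1 s h).1 hx)).2 hx
    refine ⟨insert s S', ?_, ?_, ?_⟩
    · intro C hC
      rcases Finset.mem_insert.mp hC with rfl | hC
      · exact ⟨hsT, by rw [hscard]; exact (hb n (List.mem_cons_self)).1,
          by rw [hscard]; exact (hb n (List.mem_cons_self)).2⟩
      · exact ⟨(hS'1 C hC).1.trans (Finset.sdiff_subset), (hS'1 C hC).2.1, (hS'1 C hC).2.2⟩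
    · intro C hC C' hC' hne
      have hdisj : ∀ D ∈ S', Disjoint s D := by
        intro D hD
        exact Finset.disjoint_left.mpr fun x hxs hxD =>
          (Finset.mem_sdiff.mp ((hS'1 D hD).1 hxD)).2 hxs
      rcases Finset.mem_insert.mp hC with h1 | h1 <;>
        rcases Finset.mem_insert.mp hC' with h2 | h2
      · exact absurd (h1.trans h2.symm) hne
      · exact h1 ▸ hdisj C' h2
      · exact h2 ▸ (hdisj C h1).symm
      · exact hS'2 C h1 C' h2 hne
    · rw [Finset.sum_insert hsnot, hS'3, hscard, List.sum_cons]

private lemma cnt_eq {α V : Type*} [DecidableEq α] [DecidableEq V]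
    (Q : Finset α) (R : Finset (α → V)) (A : α) (a : V)
    (S : Finset (Finset (α → V)))
    (hsub : ∀ C ∈ S, C ⊆ R.filter (fun r => r A = a)) :
    cntO (suppress Q S) A a = ∑ C ∈ S, C.card := by
  classical
  unfold cntO suppress
  rw [filt_sum, card_msum]
  refine Finset.sum_congr rfl fun C hC => ?_
  have hall : ∀ t ∈ C, t A = a := fun t ht => (Finset.mem_filter.mp (hsub C hC ht)).2
  have : Multiset.filter (fun r => r A = some a) (C.val.map (supTup Q C))
      = C.val.map (supTup Q C) := by
    apply Multiset.filter_eq_self.mpr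
    intro r hr
    obtain ⟨t, ht, rfl⟩ := Multiset.mem_map.mp hr
    have : supTup Q C t A = some (t A) := by
      unfold supTup
      rw [if_neg]
      rintro ⟨_, s, hs, hne⟩
      exact hne (by rw [hall s hs, hall t ht])
    rw [this, hall t ht]
  rw [this, Multiset.card_map]
  rfl

theorem diva_clustering_characterization {α V : Type*} [DecidableEq α] [DecidableEq V]
    (Q : Finset α) (R : Finset (α → V)) (A : α) (a : V) (lo hi k : ℕ)
    (hk : 1 ≤ k) (hlo : k ≤ lo) :
    (∀ S : Finset (Finset (α → V)),
       (∀ C ∈ S, C ⊆ R.filter (fun r => r A = a) ∧ k ≤ C.card ∧ C.card ≤ 2 * k - 1) →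
       (∀ C ∈ S, ∀ C' ∈ S, C ≠ C' → Disjoint C C') →
       ∀ p, (∑ C ∈ S, C.card) = p → lo ≤ p → p ≤ hi →
       satO (suppress Q S) A a lo hi) ∧
    ((∃ S : Finset (Finset (α → V)),
       (∀ C ∈ S, C ⊆ R.filter (fun r => r A = a) ∧ k ≤ C.card ∧ C.card ≤ 2 * k - 1) ∧
       (∀ C ∈ S, ∀ C' ∈ S, C ≠ C' → Disjoint C C') ∧
       lo ≤ (∑ C ∈ S, C.card) ∧ (∑ C ∈ S, C.card) ≤ hi) ↔
     (∃ p, lo ≤ p ∧ p ≤ min hi (R.filter (fun r => r A = a)).card ∧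
       ∃ l : Multiset ℕ, (∀ x ∈ l, k ≤ x ∧ x ≤ 2 * k - 1) ∧ l.sum = p)) ∧
    ((lo ≤ (R.filter (fun r => r A = a)).card ∧
       ∃ q, lo ≤ q * k ∧ q * k ≤ min hi (R.filter (fun r => r A = a)).card) →
     (∃ p, lo ≤ p ∧ p ≤ min hi (R.filter (fun r => r A = a)).card ∧
       ∃ l : Multiset ℕ, (∀ x ∈ l, k ≤ x ∧ x ≤ 2 * k - 1) ∧ l.sum = p)) := by
  classical
  refine ⟨?_, ?_, ?_⟩
  · -- (a)
    intro S hcl hdisj p hp hlop hphi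
    have := cnt_eq Q R A a S (fun C hC => (hcl C hC).1)
    constructor <;> rw [this, hp]
    · exact hlop
    · exact hphi
  · -- (b)
    constructor
    · rintro ⟨S, hcl, hdisj, hlo', hhi'⟩
      refine ⟨∑ C ∈ S, C.card, hlo', ?_, S.val.map Finset.card, ?_, ?_⟩
      · refine le_min hhi' ?_
        have : (∑ C ∈ S, C.card) = (S.biUnion id).card :=
          (Finset.card_biUnion (fun C hC C' hC' h => hdisj C hC C' hC' h)).symm
        rw [this]
        exact Finset.card_le_card (Finset.biUnion_subset.mpr fun C hC => (hcl C hC).1)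
      · intro x hx
        obtain ⟨C, hC, rfl⟩ := Multiset.mem_map.mp hx
        exact ⟨(hcl C hC).2.1, (hcl C hC).2.2⟩
      · rfl
    · rintro ⟨p, hlop, hpm, l, hl, hlsum⟩
      obtain ⟨S, h1, h2, h3⟩ := build_clusters k hk l.toList (R.filter (fun r => r A = a))
        (fun x hx => hl x (Multiset.mem_toList.mp hx))
        (by rw [Multiset.sum_toList, hlsum]; exact le_trans hpm (min_le_right _ _))
      rw [Multiset.sum_toList, hlsum] at h3
      exact ⟨S, h1, h2, h3 ▸ hlop, h3 ▸ le_trans hpm (min_le_left _ _)⟩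
  · -- (c)
    rintro ⟨hm, q, hq1, hq2⟩
    refine ⟨q * k, hq1, hq2, Multiset.replicate q k, ?_, ?_⟩
    · intro x hx
      have hxk := Multiset.eq_of_mem_replicate hx
      clear hm hq1 hq2
      omega
    · simp [Multiset.sum_replicate, smul_eq_mul]
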